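/- Let E be a real Banach space with a closed convex cone E⁺ such that E = E⁺ - E⁺ (E is positively generated). Then there exists α > 0 such that E is α-generated: every x ∈ E can be written x = y - z with y, z ∈ E⁺ and ‖y‖ + ‖z‖ ≤ α‖x‖. -/

import Mathlib

open Set Filter Topology Pointwise

/-- Auxiliary recursively defined sequence for the series argument. -/
noncomputable def stmt1seqX {E : Type*} [NormedAddCommGroup E] [NormedSpace ℝ E]
    (f : E → E × E) (x : E) : ℕ → E
  | 0 => x
  | n + 1 => stmt1seqX f x n -
      ((2 : ℝ)⁻¹) ^ n • ((f ((2 : ℝ) ^ n • stmt1seqX f x n)).1 -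
        (f ((2 : ℝ) ^ n • stmt1seqX f x n)).2)

theorem stmt1series {E : Type*} [NormedAddCommGroup E] [NormedSpace ℝ E] [CompleteSpace E]
    (P : Set E) (hclosed : IsClosed P) (h0 : (0 : E) ∈ P)
    (hadd : ∀ a ∈ P, ∀ b ∈ P, a + b ∈ P)
    (hcone : ∀ (t : ℝ), 0 ≤ t → ∀ a ∈ P, t • a ∈ P)
    (r : ℝ) (hrpos : 0 < r)
    (happ : ∀ v : E, ∃ p : E × E, ‖v‖ < r →
      p.1 ∈ P ∧ p.2 ∈ P ∧ ‖p.1‖ ≤ 1 ∧ ‖p.2‖ ≤ 1 ∧ ‖v - (p.1 - p.2)‖ < r / 2)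
    (x : E) (hx : ‖x‖ < r) :
    ∃ y ∈ P, ∃ z ∈ P, x = y - z ∧ ‖y‖ ≤ 2 ∧ ‖z‖ ≤ 2 := by
  choose f hf using happ
  obtain ⟨X, hX0, hXsucc⟩ : ∃ X : ℕ → E, X 0 = x ∧ ∀ n, X (n + 1) = X n -
      ((2 : ℝ)⁻¹) ^ n • ((f ((2 : ℝ) ^ n • X n)).1 - (f ((2 : ℝ) ^ n • X n)).2) :=
    ⟨stmt1seqX f x, by rw [stmt1seqX], fun n => by rw [stmt1seqX]⟩
  have hbound : ∀ n, ‖X n‖ < r * ((2 : ℝ)⁻¹) ^ n := by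
    intro n
    induction n with
    | zero => rw [hX0]; simpa using hx
    | succ n ih =>
      have hv : ‖(2 : ℝ) ^ n • X n‖ < r := by
        rw [norm_smul, Real.norm_of_nonneg (by positivity)]
        calc (2 : ℝ) ^ n * ‖X n‖ < (2 : ℝ) ^ n * (r * ((2 : ℝ)⁻¹) ^ n) :=
              mul_lt_mul_of_pos_left ih (by positivity)
          _ = r := by rw [inv_pow]; field_simp
      obtain ⟨-, -, -, -, hclose⟩ := hf _ hv
      have key : X (n + 1) = ((2 : ℝ)⁻¹) ^ n •
          ((2 : ℝ) ^ n • X n - ((f ((2 : ℝ) ^ n • X n)).1 - (f ((2 : ℝ) ^ n • X n)).2)) := by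
        rw [hXsucc n]
        match_scalars <;> field_simp
        rw [← mul_pow]; norm_num
      rw [key, norm_smul, Real.norm_of_nonneg (by positivity)]
      calc ((2 : ℝ)⁻¹) ^ n * ‖(2 : ℝ) ^ n • X n -
            ((f ((2 : ℝ) ^ n • X n)).1 - (f ((2 : ℝ) ^ n • X n)).2)‖
          < ((2 : ℝ)⁻¹) ^ n * (r / 2) := mul_lt_mul_of_pos_left hclose (by positivity)
        _ = r * ((2 : ℝ)⁻¹) ^ (n + 1) := by ring
  have hvn : ∀ n, ‖(2 : ℝ) ^ n • X n‖ < r := by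
    intro n
    rw [norm_smul, Real.norm_of_nonneg (by positivity)]
    calc (2 : ℝ) ^ n * ‖X n‖ < (2 : ℝ) ^ n * (r * ((2 : ℝ)⁻¹) ^ n) :=
          mul_lt_mul_of_pos_left (hbound n) (by positivity)
      _ = r := by rw [inv_pow]; field_simp
  obtain ⟨Y, hYdef⟩ : ∃ Y : ℕ → E, ∀ n, Y n = ((2 : ℝ)⁻¹) ^ n • (f ((2 : ℝ) ^ n • X n)).1 :=
    ⟨_, fun n => rfl⟩
  obtain ⟨Z, hZdef⟩ : ∃ Z : ℕ → E, ∀ n, Z n = ((2 : ℝ)⁻¹) ^ n • (f ((2 : ℝ) ^ n • X n)).2 :=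
    ⟨_, fun n => rfl⟩
  have hfn : ∀ n, (f ((2 : ℝ) ^ n • X n)).1 ∈ P ∧ (f ((2 : ℝ) ^ n • X n)).2 ∈ P ∧
      ‖(f ((2 : ℝ) ^ n • X n)).1‖ ≤ 1 ∧ ‖(f ((2 : ℝ) ^ n • X n)).2‖ ≤ 1 := by
    intro n
    obtain ⟨h1, h2, h3, h4, -⟩ := hf _ (hvn n)
    exact ⟨h1, h2, h3, h4⟩
  have hYnorm : ∀ n, ‖Y n‖ ≤ ((1 : ℝ) / 2) ^ n := by
    intro n
    rw [hYdef n, norm_smul, Real.norm_of_nonneg (by positivity)]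
    calc ((2 : ℝ)⁻¹) ^ n * ‖(f ((2 : ℝ) ^ n • X n)).1‖ ≤ ((2 : ℝ)⁻¹) ^ n * 1 :=
          mul_le_mul_of_nonneg_left (hfn n).2.2.1 (by positivity)
      _ = ((1 : ℝ) / 2) ^ n := by norm_num
  have hZnorm : ∀ n, ‖Z n‖ ≤ ((1 : ℝ) / 2) ^ n := by
    intro n
    rw [hZdef n, norm_smul, Real.norm_of_nonneg (by positivity)]
    calc ((2 : ℝ)⁻¹) ^ n * ‖(f ((2 : ℝ) ^ n • X n)).2‖ ≤ ((2 : ℝ)⁻¹) ^ n * 1 :=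
          mul_le_mul_of_nonneg_left (hfn n).2.2.2 (by positivity)
      _ = ((1 : ℝ) / 2) ^ n := by norm_num
  have hYns : Summable (fun n => ‖Y n‖) :=
    Summable.of_nonneg_of_le (fun n => norm_nonneg _) hYnorm summable_geometric_two
  have hZns : Summable (fun n => ‖Z n‖) :=
    Summable.of_nonneg_of_le (fun n => norm_nonneg _) hZnorm summable_geometric_two
  have hYsummable : Summable Y :=
    Summable.of_norm_bounded summable_geometric_two hYnorm
  have hZsummable : Summable Z :=
    Summable.of_norm_bounded summable_geometric_two hZnorm
  have hYsum : HasSum Y (∑' n, Y n) := hYsummable.hasSum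
  have hZsum : HasSum Z (∑' n, Z n) := hZsummable.hasSum
  have hpartial : ∀ n, x - ∑ k ∈ Finset.range n, (Y k - Z k) = X n := by
    intro n
    induction n with
    | zero => simp only [Finset.range_zero, Finset.sum_empty, sub_zero, hX0]
    | succ n ih =>
      have hstep : Y n - Z n = ((2 : ℝ)⁻¹) ^ n •
          ((f ((2 : ℝ) ^ n • X n)).1 - (f ((2 : ℝ) ^ n • X n)).2) := by
        rw [hYdef n, hZdef n, smul_sub]
      rw [Finset.sum_range_succ, hstep, hXsucc n, ← ih]
      abel
  have hXlim : Tendsto X atTop (𝓝 0) := by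
    have h1 : Tendsto (fun n => r * ((2 : ℝ)⁻¹) ^ n) atTop (𝓝 0) := by
      have := tendsto_pow_atTop_nhds_zero_of_lt_one (by norm_num : (0:ℝ) ≤ 2⁻¹)
        (by norm_num : (2:ℝ)⁻¹ < 1)
      simpa using this.const_mul r
    exact squeeze_zero_norm (fun n => (hbound n).le) h1
  have hsumYZ : HasSum (fun n => Y n - Z n) ((∑' n, Y n) - ∑' n, Z n) := hYsum.sub hZsum
  have hxyz : x = (∑' n, Y n) - ∑' n, Z n := by
    have h2 : Tendsto (fun n => x - ∑ k ∈ Finset.range n, (Y k - Z k)) atTop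
        (𝓝 (x - ((∑' n, Y n) - ∑' n, Z n))) :=
      tendsto_const_nhds.sub hsumYZ.tendsto_sum_nat
    have h3 : Tendsto (fun n => x - ∑ k ∈ Finset.range n, (Y k - Z k)) atTop (𝓝 0) := by
      simpa only [hpartial] using hXlim
    exact (sub_eq_zero.mp (tendsto_nhds_unique h2 h3)).symm ▸ rfl
  have hsumP : ∀ (W : ℕ → E), (∀ n, W n ∈ P) → ∀ n, ∑ k ∈ Finset.range n, W k ∈ P := by
    intro W hW n
    induction n with
    | zero => simpa using h0
    | succ n ih => rw [Finset.sum_range_succ]; exact hadd _ ih _ (hW n)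
  have hYP : ∀ n, Y n ∈ P := fun n =>
    hYdef n ▸ hcone _ (by positivity) _ (hfn n).1
  have hZP : ∀ n, Z n ∈ P := fun n =>
    hZdef n ▸ hcone _ (by positivity) _ (hfn n).2.1
  have hyP : (∑' n, Y n) ∈ P :=
    hclosed.mem_of_tendsto hYsum.tendsto_sum_nat
      (Eventually.of_forall fun n => hsumP Y hYP n)
  have hzP : (∑' n, Z n) ∈ P :=
    hclosed.mem_of_tendsto hZsum.tendsto_sum_nat
      (Eventually.of_forall fun n => hsumP Z hZP n)
  have hynorm : ‖∑' n, Y n‖ ≤ 2 := by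
    calc ‖∑' n, Y n‖ ≤ ∑' n, ‖Y n‖ := norm_tsum_le_tsum_norm hYns
      _ ≤ ∑' n, ((1 : ℝ) / 2) ^ n :=
          Summable.tsum_le_tsum hYnorm hYns summable_geometric_two
      _ = 2 := tsum_geometric_two
  have hznorm : ‖∑' n, Z n‖ ≤ 2 := by
    calc ‖∑' n, Z n‖ ≤ ∑' n, ‖Z n‖ := norm_tsum_le_tsum_norm hZns
      _ ≤ ∑' n, ((1 : ℝ) / 2) ^ n :=
          Summable.tsum_le_tsum hZnorm hZns summable_geometric_two
      _ = 2 := tsum_geometric_two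
  exact ⟨∑' n, Y n, hyP, ∑' n, Z n, hzP, hxyz, hynorm, hznorm⟩

/-- A positively generated ordered Banach space is `α`-generated for some `α > 0`. -/
theorem stmt_1 {E : Type*} [NormedAddCommGroup E] [NormedSpace ℝ E] [CompleteSpace E]
    (P : Set E) (hclosed : IsClosed P) (hconv : Convex ℝ P)
    (hcone : ∀ (t : ℝ), 0 ≤ t → ∀ x ∈ P, t • x ∈ P)
    (hgen : ∀ x : E, ∃ y ∈ P, ∃ z ∈ P, x = y - z) :
    ∃ α : ℝ, 0 < α ∧ ∀ x : E, ∃ y ∈ P, ∃ z ∈ P, x = y - z ∧ ‖y‖ + ‖z‖ ≤ α * ‖x‖ := by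
  obtain ⟨p₀, hp₀, -⟩ := hgen 0
  have h0 : (0 : E) ∈ P := by simpa using hcone 0 le_rfl p₀ hp₀
  have hadd : ∀ a ∈ P, ∀ b ∈ P, a + b ∈ P := by
    intro a ha b hb
    have h1 : (1/2 : ℝ) • a + (1/2 : ℝ) • b ∈ P :=
      hconv ha hb (by norm_num) (by norm_num) (by norm_num)
    have h2 := hcone 2 (by norm_num) _ h1
    rw [smul_add, smul_smul, smul_smul] at h2
    norm_num at h2
    exact h2
  set C : Set E := {x | ∃ y ∈ P, ∃ z ∈ P, ‖y‖ ≤ 1 ∧ ‖z‖ ≤ 1 ∧ x = y - z} with hC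
  have hCconv : Convex ℝ C := by
    rintro u ⟨y₁, hy₁, z₁, hz₁, hny₁, hnz₁, rfl⟩ v ⟨y₂, hy₂, z₂, hz₂, hny₂, hnz₂, rfl⟩
      a b ha hb hab
    refine ⟨a • y₁ + b • y₂, hadd _ (hcone a ha _ hy₁) _ (hcone b hb _ hy₂),
      a • z₁ + b • z₂, hadd _ (hcone a ha _ hz₁) _ (hcone b hb _ hz₂), ?_, ?_, ?_⟩
    · calc ‖a • y₁ + b • y₂‖ ≤ ‖a • y₁‖ + ‖b • y₂‖ := norm_add_le _ _
        _ = a * ‖y₁‖ + b * ‖y₂‖ := by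
            rw [norm_smul, norm_smul, Real.norm_of_nonneg ha, Real.norm_of_nonneg hb]
        _ ≤ a * 1 + b * 1 := by gcongr
        _ = 1 := by linarith
    · calc ‖a • z₁ + b • z₂‖ ≤ ‖a • z₁‖ + ‖b • z₂‖ := norm_add_le _ _
        _ = a * ‖z₁‖ + b * ‖z₂‖ := by
            rw [norm_smul, norm_smul, Real.norm_of_nonneg ha, Real.norm_of_nonneg hb]
        _ ≤ a * 1 + b * 1 := by gcongr
        _ = 1 := by linarith
    · module
  have hCsymm : ∀ u ∈ C, -u ∈ C := by
    rintro u ⟨yy, hy, zz, hz, hny, hnz, rfl⟩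
    exact ⟨zz, hz, yy, hy, hnz, hny, by abel⟩
  -- Baire category argument
  have hunion : ⋃ n : ℕ, closure (((n : ℝ) + 1) • C) = univ := by
    refine eq_univ_of_forall fun x => ?_
    obtain ⟨yy, hy, zz, hz, rfl⟩ := hgen x
    obtain ⟨n, hn⟩ := exists_nat_ge (max ‖yy‖ ‖zz‖)
    have hn1 : (0 : ℝ) < (n : ℝ) + 1 := by positivity
    have hyn : ‖yy‖ ≤ (n : ℝ) + 1 :=
      le_trans (le_trans (le_max_left _ _) hn) (by linarith)
    have hzn : ‖zz‖ ≤ (n : ℝ) + 1 :=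
      le_trans (le_trans (le_max_right _ _) hn) (by linarith)
    refine mem_iUnion.2 ⟨n, subset_closure ?_⟩
    refine ⟨((n : ℝ) + 1)⁻¹ • (yy - zz), ⟨((n : ℝ) + 1)⁻¹ • yy,
      hcone _ (by positivity) _ hy, ((n : ℝ) + 1)⁻¹ • zz,
      hcone _ (by positivity) _ hz, ?_, ?_, by rw [smul_sub]⟩, ?_⟩
    · rw [norm_smul, Real.norm_of_nonneg (by positivity : (0:ℝ) ≤ ((n : ℝ) + 1)⁻¹)]
      exact inv_mul_le_one_of_le₀ hyn hn1.le
    · rw [norm_smul, Real.norm_of_nonneg (by positivity : (0:ℝ) ≤ ((n : ℝ) + 1)⁻¹)]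
      exact inv_mul_le_one_of_le₀ hzn hn1.le
    · show ((n : ℝ) + 1) • (((n : ℝ) + 1)⁻¹ • (yy - zz)) = yy - zz
      rw [smul_smul, mul_inv_cancel₀ hn1.ne', one_smul]
  obtain ⟨n, hnint⟩ := nonempty_interior_of_iUnion_of_closed
    (fun n : ℕ => isClosed_closure (s := ((n : ℝ) + 1) • C)) hunion
  have hn1 : ((n : ℝ) + 1) ≠ 0 := by positivity
  have hclsmul : closure (((n : ℝ) + 1) • C) = ((n : ℝ) + 1) • closure C :=
    closure_smul₀' hn1 C
  rw [hclsmul, interior_smul₀ hn1] at hnint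
  obtain ⟨w, hw⟩ := hnint
  obtain ⟨u, hu, rfl⟩ := hw
  have hclconv : Convex ℝ (closure C) := hCconv.closure
  have hnegu : -u ∈ closure C :=
    map_mem_closure continuous_neg (interior_subset hu) fun a ha => hCsymm a ha
  have h0int : (0 : E) ∈ interior (closure C) := by
    have := hclconv.combo_interior_self_mem_interior hu hnegu
      (by norm_num : (0:ℝ) < 1/2) (by norm_num : (0:ℝ) ≤ 1/2) (by norm_num)
    simpa using this
  obtain ⟨r, hrpos, hball⟩ := Metric.mem_nhds_iff.1 (mem_interior_iff_mem_nhds.1 h0int)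
  have happ : ∀ v : E, ∃ p : E × E, ‖v‖ < r →
      p.1 ∈ P ∧ p.2 ∈ P ∧ ‖p.1‖ ≤ 1 ∧ ‖p.2‖ ≤ 1 ∧ ‖v - (p.1 - p.2)‖ < r / 2 := by
    intro v
    by_cases hv : ‖v‖ < r
    · have hvcl : v ∈ closure C := hball (by simpa [Metric.mem_ball] using hv)
      obtain ⟨c, hcC, hcd⟩ := Metric.mem_closure_iff.1 hvcl (r / 2) (by positivity)
      obtain ⟨yy, hy, zz, hz, hny, hnz, rfl⟩ := hcC
      exact ⟨(yy, zz), fun _ => ⟨hy, hz, hny, hnz, by rwa [← dist_eq_norm]⟩⟩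
    · exact ⟨(0, 0), fun h => absurd h hv⟩
  refine ⟨8 / r, by positivity, fun x => ?_⟩
  by_cases hx : x = 0
  · exact ⟨0, h0, 0, h0, by simp [hx], by simp [hx]⟩
  · have hxn : (0 : ℝ) < ‖x‖ := norm_pos_iff.2 hx
    set c : ℝ := r / (2 * ‖x‖) with hc
    have hcpos : 0 < c := by positivity
    have hcx : ‖c • x‖ < r := by
      rw [norm_smul, Real.norm_of_nonneg hcpos.le, hc, div_mul_eq_mul_div, mul_comm,
        div_lt_iff₀ (by positivity)]
      nlinarith
    obtain ⟨yy, hy, zz, hz, hxyz, hny, hnz⟩ :=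
      stmt1series P hclosed h0 hadd hcone r hrpos happ (c • x) hcx
    refine ⟨c⁻¹ • yy, hcone _ (by positivity) _ hy, c⁻¹ • zz, hcone _ (by positivity) _ hz,
      ?_, ?_⟩
    · rw [← smul_sub, ← hxyz, smul_smul, inv_mul_cancel₀ hcpos.ne', one_smul]
    · rw [norm_smul, norm_smul, Real.norm_of_nonneg (by positivity : (0:ℝ) ≤ c⁻¹)]
      have hcinv : c⁻¹ = 2 * ‖x‖ / r := by rw [hc]; field_simp
      rw [hcinv]
      calc 2 * ‖x‖ / r * ‖yy‖ + 2 * ‖x‖ / r * ‖zz‖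
          ≤ 2 * ‖x‖ / r * 2 + 2 * ‖x‖ / r * 2 := by gcongr <;> positivity
        _ = 8 / r * ‖x‖ := by ring
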